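/- In a Heinlein wall W of any size r ≥ 1, there do not exist two edge-disjoint (a*–b*, c*–d*) linkages, where an (a*–b*, c*–d*) linkage is the vertex-disjoint union of an a*–b* path and a c*–d* path. -/

import Mathlib

/-- Vertices of a Heinlein wall of size `r`: path vertices `u j i` (path `j`,
position `i`, both 0-based), bottleneck vertices `z t` (`t = 0, …, r`), and the
terminals `a`, `b`.  We write `c = z 0` and `d = z r`. -/
inductive HWVert (r : ℕ) where
  | u : Fin r → Fin (2 * r) → HWVert r
  | z : Fin (r + 1) → HWVert r
  | a : HWVert r
  | b : HWVert r
deriving DecidableEq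

/-- The defining relation of the Heinlein wall (paper 1-based indices translated
to 0-based ones): `u j i — u j (i+1)`; `z t — u j i` for `i` even iff `t = j`
and for `i` odd iff `t = j + 1`; `z t — z (t+1)`; `a — u j 0`; `b — u j (2r-1)`. -/
def HWRel (r : ℕ) : HWVert r → HWVert r → Prop := fun x y =>
  match x, y with
  | .u j i, .u j' i' => j = j' ∧ i'.val = i.val + 1
  | .z t, .u j i => (i.val % 2 = 0 ∧ t.val = j.val) ∨ (i.val % 2 = 1 ∧ t.val = j.val + 1)
  | .z t, .z t' => t'.val = t.val + 1
  | .a, .u _ i => i.val = 0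
  | .b, .u _ i => i.val = 2 * r - 1
  | _, _ => False

/-- The Heinlein wall of size `r`. -/
def HW (r : ℕ) : SimpleGraph (HWVert r) := SimpleGraph.fromRel (HWRel r)

/-- An (`a*`–`b*`, `c*`–`d*`) linkage in the Heinlein wall of size `r`:
a vertex-disjoint union of an `a*`–`b*` path and a `c*`–`d*` path
(recall `c* = z 0` and `d* = z r`). -/
structure HWLinkage (r : ℕ) where
  p : (HW r).Walk .a .b
  q : (HW r).Walk (.z 0) (.z (Fin.last r))
  hp : p.IsPath
  hq : q.IsPath
  disj : ∀ x, x ∈ p.support → x ∉ q.support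

namespace HWAux

open SimpleGraph Walk

variable {r : ℕ}

/-- Every bottleneck vertex lies on the `c–d` path of a linkage. -/
lemma z_mem_q (L : HWLinkage r) (t : Fin (r + 1)) : HWVert.z t ∈ L.q.support := by
  rcases Nat.eq_zero_or_eq_succ_pred t.val with h0 | hs
  · have : t = 0 := Fin.ext (by simpa using h0)
    subst this
    exact L.q.start_mem_support
  · set s := t.val - 1 with hsdef
    have hts : t.val = s + 1 := hs
    have hsr : s + 1 ≤ r := by have := t.isLt; omega
    -- cut: everything with "level" ≤ s
    set S : Set (HWVert r) := {x | match x with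
      | .z t' => t'.val ≤ s
      | .u t' _ => t'.val ≤ s
      | .a => False
      | .b => False} with hS
    have h0S : (HWVert.z 0 : HWVert r) ∈ S := by simp [hS]
    have hlS : (HWVert.z (Fin.last r) : HWVert r) ∉ S := by
      simp only [hS, Set.mem_setOf_eq, Fin.val_last]; omega
    obtain ⟨d, hd, hfst, hsnd⟩ := L.q.exists_boundary_dart S h0S hlS
    have hadj : (HW r).Adj d.fst d.snd := d.adj
    have hsupp : d.snd ∈ L.q.support := L.q.dart_snd_mem_support_of_mem_darts hd
    have hna : d.snd ≠ HWVert.a :=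
      fun h => L.disj HWVert.a L.p.start_mem_support (h ▸ hsupp)
    have hnb : d.snd ≠ HWVert.b :=
      fun h => L.disj HWVert.b L.p.end_mem_support (h ▸ hsupp)
    simp only [HW, SimpleGraph.fromRel_adj] at hadj
    obtain ⟨-, hrel⟩ := hadj
    have : d.snd = HWVert.z t := by
      match hx : d.fst, hy : d.snd with
      | .u t' i, .u t'' i' =>
        rw [hx] at hfst; rw [hy] at hsnd
        simp only [hS, Set.mem_setOf_eq] at hfst hsnd
        rw [hx, hy] at hrel
        simp only [HWRel] at hrel
        rcases hrel with ⟨h1, -⟩ | ⟨h1, -⟩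
        · rw [h1] at hfst; exact absurd hfst hsnd
        · rw [h1] at hsnd; exact absurd hfst hsnd
      | .u t' i, .z t'' =>
        rw [hx] at hfst; rw [hy] at hsnd
        simp only [hS, Set.mem_setOf_eq] at hfst hsnd
        rw [hx, hy] at hrel
        simp only [HWRel] at hrel
        rcases hrel with h' | ⟨-, h1⟩ | ⟨-, h1⟩
        · exact absurd h' id
        · omega
        · have : t''.val = t.val := by omega
          exact congrArg HWVert.z (Fin.ext this)
      | .u t' i, .a => exact absurd hy hna
      | .u t' i, .b => exact absurd hy hnb
      | .z t', .u t'' i =>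
        rw [hx] at hfst; rw [hy] at hsnd
        simp only [hS, Set.mem_setOf_eq] at hfst hsnd
        rw [hx, hy] at hrel
        simp only [HWRel] at hrel
        rcases hrel with (⟨-, h1⟩ | ⟨-, h1⟩) | h' <;> first | omega | exact absurd h' id
      | .z t', .z t'' =>
        rw [hx] at hfst; rw [hy] at hsnd
        simp only [hS, Set.mem_setOf_eq] at hfst hsnd
        rw [hx, hy] at hrel
        simp only [HWRel] at hrel
        rcases hrel with h1 | h1
        · have : t''.val = t.val := by omega
          exact congrArg HWVert.z (Fin.ext this)
        · omega
      | .z t', .a => exact absurd hy hna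
      | .z t', .b => exact absurd hy hnb
      | .a, y => rw [hx] at hfst; simp [hS] at hfst
      | .b, y => rw [hx] at hfst; simp [hS] at hfst
    rw [← this]
    exact hsupp

end HWAux

namespace HWAux2
open SimpleGraph Walk HWAux
variable {r : ℕ}

lemma dart_edge_mem_edges {V : Type*} {G : SimpleGraph V} {u v : V} {w : G.Walk u v}
    {d : G.Dart} (hd : d ∈ w.darts) : s(d.fst, d.snd) ∈ w.edges :=
  List.mem_map_of_mem (f := Dart.edge) hd

/-- The `c–d` path of a linkage crosses level `j` either by the bottleneck edge
`z j — z (j+1)` or by an edge inside row `j`. -/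
lemma cross (L : HWLinkage r) (j : ℕ) (hj : j < r) :
    s(HWVert.z ⟨j, by omega⟩, HWVert.z ⟨j + 1, by omega⟩) ∈ L.q.edges ∨
    ∃ k, ∃ hk : k + 1 < 2 * r,
      s(HWVert.u ⟨j, hj⟩ ⟨k, by omega⟩, HWVert.u ⟨j, hj⟩ ⟨k + 1, hk⟩) ∈ L.q.edges := by
  set S : Set (HWVert r) := {x | match x with
    | .z t' => t'.val ≤ j
    | .u t' i => t'.val < j ∨ (t'.val = j ∧ i.val % 2 = 0)
    | .a => False
    | .b => False} with hS
  have h0S : (HWVert.z 0 : HWVert r) ∈ S := by simp [hS]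
  have hlS : (HWVert.z (Fin.last r) : HWVert r) ∉ S := by
    simp only [hS, Set.mem_setOf_eq, Fin.val_last]; omega
  obtain ⟨d, hd, hfst, hsnd⟩ := L.q.exists_boundary_dart S h0S hlS
  have hadj : (HW r).Adj d.fst d.snd := d.adj
  have hedge : s(d.fst, d.snd) ∈ L.q.edges := dart_edge_mem_edges hd
  have hsupp : d.snd ∈ L.q.support := L.q.dart_snd_mem_support_of_mem_darts hd
  have hna : d.snd ≠ HWVert.a :=
    fun h => L.disj HWVert.a L.p.start_mem_support (h ▸ hsupp)
  have hnb : d.snd ≠ HWVert.b :=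
    fun h => L.disj HWVert.b L.p.end_mem_support (h ▸ hsupp)
  simp only [HW, SimpleGraph.fromRel_adj] at hadj
  obtain ⟨-, hrel⟩ := hadj
  match hx : d.fst, hy : d.snd with
  | .u t' i, .u t'' i' =>
    rw [hx] at hfst; rw [hy] at hsnd; rw [hx, hy] at hedge hrel
    simp only [hS, Set.mem_setOf_eq] at hfst hsnd
    simp only [HWRel] at hrel
    rcases hrel with ⟨h1, h2⟩ | ⟨h1, h2⟩
    · -- t' = t'', i'.val = i.val + 1
      subst h1
      have htj : t'.val = j := by
        rcases hfst with h | ⟨h, -⟩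
        · exact absurd (Or.inl h) hsnd
        · exact h
      have hlt : i.val + 1 < 2 * r := by
        have := i'.isLt; omega
      have ht : t' = ⟨j, hj⟩ := Fin.ext htj
      have hi2 : i' = ⟨i.val + 1, hlt⟩ := Fin.ext h2
      rw [ht, hi2] at hedge
      exact Or.inr ⟨i.val, hlt, hedge⟩
    · -- t'' = t', i.val = i'.val + 1
      subst h1
      have htj : t''.val = j := by
        rcases hfst with h | ⟨h, -⟩
        · exact absurd (Or.inl h) hsnd
        · exact h
      have hlt : i'.val + 1 < 2 * r := by
        have := i.isLt; omega
      have ht : t'' = ⟨j, hj⟩ := Fin.ext htj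
      have hi2 : i = ⟨i'.val + 1, hlt⟩ := Fin.ext h2
      rw [ht, hi2, Sym2.eq_swap] at hedge
      exact Or.inr ⟨i'.val, hlt, hedge⟩
  | .u t' i, .z t'' =>
    rw [hx] at hfst; rw [hy] at hsnd; rw [hx, hy] at hrel
    simp only [hS, Set.mem_setOf_eq] at hfst hsnd
    simp only [HWRel] at hrel
    rcases hrel with h' | ⟨he, h1⟩ | ⟨ho, h1⟩
    · exact absurd h' id
    · exact absurd (by omega : t''.val ≤ j) hsnd
    · have : t'.val < j := by rcases hfst with h | ⟨-, h⟩; exact h; omega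
      exact absurd (by omega : t''.val ≤ j) hsnd
  | .u t' i, .a => exact absurd hy hna
  | .u t' i, .b => exact absurd hy hnb
  | .z t', .u t'' i =>
    rw [hx] at hfst; rw [hy] at hsnd; rw [hx, hy] at hrel
    simp only [hS, Set.mem_setOf_eq] at hfst hsnd
    simp only [HWRel] at hrel
    rcases hrel with (⟨he, h1⟩ | ⟨ho, h1⟩) | h'
    · rcases Nat.lt_or_ge t''.val j with h | h
      · exact absurd (Or.inl h) hsnd
      · exact absurd (Or.inr ⟨by omega, he⟩) hsnd
    · exact absurd (Or.inl (by omega)) hsnd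
    · exact absurd h' id
  | .z t', .z t'' =>
    rw [hx] at hfst; rw [hy] at hsnd; rw [hx, hy] at hedge hrel
    simp only [hS, Set.mem_setOf_eq] at hfst hsnd
    simp only [HWRel] at hrel
    rcases hrel with h1 | h1
    · have hb1 : j < r + 1 := by omega
      have hb2 : j + 1 < r + 1 := by omega
      have ht1 : t' = ⟨j, hb1⟩ := Fin.ext (show t'.val = j by omega)
      have ht2 : t'' = ⟨j + 1, hb2⟩ := Fin.ext (show t''.val = j + 1 by omega)
      rw [ht1, ht2] at hedge
      exact Or.inl hedge
    · omega
  | .z t', .a => exact absurd hy hna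
  | .z t', .b => exact absurd hy hnb
  | .a, y => rw [hx] at hfst; simp [hS] at hfst
  | .b, y => rw [hx] at hfst; simp [hS] at hfst

end HWAux2

namespace HWAux3
open SimpleGraph Walk HWAux HWAux2
variable {r : ℕ}

/-- Forced march: a path to `b` that avoids `a`, all bottleneck vertices, and
the previous row vertex must march straight along its row, so it contains all
remaining row edges. -/
lemma forced : ∀ {x yb : HWVert r} (w : (HW r).Walk x yb), yb = HWVert.b → w.IsPath →
    HWVert.a ∉ w.support → (∀ t, HWVert.z t ∉ w.support) →
    ∀ (j : Fin r) (i : Fin (2 * r)), x = HWVert.u j i →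
    (∀ i' : Fin (2 * r), i'.val + 1 = i.val → HWVert.u j i' ∉ w.support) →
    ∀ k (hk : k + 1 < 2 * r), i.val ≤ k →
      s(HWVert.u j ⟨k, Nat.lt_of_succ_lt hk⟩, HWVert.u j ⟨k + 1, hk⟩) ∈ w.edges := by
  intro x yb w
  induction w with
  | nil =>
    intro hyb _ _ _ j i hx
    rw [hyb] at hx
    exact absurd hx (by simp)
  | @cons x y _ hadj w' ih =>
    intro hyb hpath ha hz j i hx hpred k hk hik
    subst hyb
    subst hx
    rw [Walk.cons_isPath_iff] at hpath
    obtain ⟨hp', hxn⟩ := hpath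
    have ha' : HWVert.a ∉ w'.support := fun h => ha (by rw [Walk.support_cons]; exact List.mem_cons_of_mem _ h)
    have hz' : ∀ t, HWVert.z t ∉ w'.support := fun t h => hz t (by rw [Walk.support_cons]; exact List.mem_cons_of_mem _ h)
    have hadj' := hadj
    simp only [HW, SimpleGraph.fromRel_adj] at hadj'
    obtain ⟨-, hrel⟩ := hadj'
    match hy : y, hadj, w' with
    | HWVert.u j₂ i₂, hadj, w' =>
      simp only [HWRel] at hrel
      rcases hrel with ⟨hj2, hi2⟩ | ⟨hj2, hi2⟩
      · -- forward step
        subst hj2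
        rcases Nat.eq_or_lt_of_le hik with hik' | hik'
        · -- this is the edge we are looking for
          have e1 : (⟨k, Nat.lt_of_succ_lt hk⟩ : Fin (2 * r)) = i :=
            Fin.ext (show k = i.val by omega)
          have e2 : (⟨k + 1, hk⟩ : Fin (2 * r)) = i₂ :=
            Fin.ext (show k + 1 = i₂.val by omega)
          rw [e1, e2, Walk.edges_cons]
          exact List.mem_cons_self
        · -- deeper in the walk
          have hpred' : ∀ i' : Fin (2 * r), i'.val + 1 = i₂.val →
              HWVert.u j i' ∉ w'.support := by
            intro i' hi'
            have : i' = i := Fin.ext (by omega)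
            rw [this]
            exact hxn
          have := ih rfl hp' ha' hz' j i₂ rfl hpred' k hk (by omega)
          rw [Walk.edges_cons]
          exact List.mem_cons_of_mem _ this
      · -- backward step: contradicts hpred
        subst hj2
        have hmem : HWVert.u j₂ i₂ ∈ (Walk.cons hadj w').support := by
          rw [Walk.support_cons]
          exact List.mem_cons_of_mem _ w'.start_mem_support
        exact absurd hmem (hpred i₂ (by omega))
    | HWVert.z t, hadj, w' =>
      exact absurd (by rw [Walk.support_cons]; exact List.mem_cons_of_mem _ w'.start_mem_support)
        (hz t)
    | HWVert.a, hadj, w' =>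
      exact absurd (by rw [Walk.support_cons]; exact List.mem_cons_of_mem _ w'.start_mem_support)
        ha
    | HWVert.b, hadj, w' =>
      simp only [HWRel] at hrel
      rcases hrel with h' | h'
      · exact absurd h' id
      · exact absurd hik (by omega)

/-- The `a–b` path of a linkage runs along a single row and contains all of its
edges. -/
lemma rowEdges (L : HWLinkage r) :
    ∃ j : Fin r, ∀ k (hk : k + 1 < 2 * r),
      s(HWVert.u j ⟨k, Nat.lt_of_succ_lt hk⟩, HWVert.u j ⟨k + 1, hk⟩) ∈ L.p.edges := by
  have hzp : ∀ t, HWVert.z t ∉ L.p.support := fun t h => L.disj _ h (z_mem_q L t)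
  have hab : (HWVert.a : HWVert r) ≠ HWVert.b := by simp
  obtain ⟨y, hadj, w', hw⟩ := Walk.exists_eq_cons_of_ne hab L.p
  have hadj' := hadj
  simp only [HW, SimpleGraph.fromRel_adj] at hadj'
  obtain ⟨-, hrel⟩ := hadj'
  match hy : y, hadj, w', hw with
  | HWVert.u j i₀, hadj, w', hw =>
    simp only [HWRel] at hrel
    have hi₀ : i₀.val = 0 := by rcases hrel with h | h; exact h; exact absurd h id
    refine ⟨j, fun k hk => ?_⟩
    have hpath := L.hp
    rw [hw, Walk.cons_isPath_iff] at hpath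
    obtain ⟨hp', han⟩ := hpath
    have hz' : ∀ t, HWVert.z t ∉ w'.support := by
      intro t h
      exact hzp t (by rw [hw, Walk.support_cons]; exact List.mem_cons_of_mem _ h)
    have hpred : ∀ i' : Fin (2 * r), i'.val + 1 = i₀.val → HWVert.u j i' ∉ w'.support := by
      intro i' hi'
      omega
    have := forced w' rfl hp' han hz' j i₀ rfl hpred k hk (by omega)
    rw [hw, Walk.edges_cons]
    exact List.mem_cons_of_mem _ this
  | HWVert.z t, hadj, w', hw =>
    simp only [HWRel, or_self] at hrel
  | HWVert.a, hadj, w', hw =>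
    exact absurd hadj (HW r).irrefl
  | HWVert.b, hadj, w', hw =>
    simp only [HWRel, or_self] at hrel

end HWAux3


/-- In a Heinlein wall of size `r ≥ 1` there are no two edge-disjoint
(`a*`–`b*`, `c*`–`d*`) linkages: any two linkages share an edge. -/
theorem heinleinWall_no_two_edgeDisjoint_linkages (r : ℕ) (hr : 1 ≤ r)
    (L₁ L₂ : HWLinkage r) :
    ∃ e : Sym2 (HWVert r),
      (e ∈ L₁.p.edges ∨ e ∈ L₁.q.edges) ∧ (e ∈ L₂.p.edges ∨ e ∈ L₂.q.edges) := by
  obtain ⟨j₁, hA⟩ := HWAux3.rowEdges L₁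
  have hB₁ := HWAux2.cross L₁ j₁.val j₁.isLt
  rcases hB₁ with hz₁ | ⟨k, hk, hmem⟩
  · have hB₂ := HWAux2.cross L₂ j₁.val j₁.isLt
    rcases hB₂ with hz₂ | ⟨k, hk, hmem⟩
    · exact ⟨_, Or.inr hz₁, Or.inr hz₂⟩
    · have hp : s(HWVert.u ⟨j₁.val, j₁.isLt⟩ ⟨k, Nat.lt_of_succ_lt hk⟩,
          HWVert.u ⟨j₁.val, j₁.isLt⟩ ⟨k + 1, hk⟩) ∈ L₁.p.edges := hA k hk
      exact ⟨_, Or.inl hp, Or.inr hmem⟩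
  · -- impossible: the row edge of L₁.q lies on L₁.p
    have hp : s(HWVert.u ⟨j₁.val, j₁.isLt⟩ ⟨k, Nat.lt_of_succ_lt hk⟩,
        HWVert.u ⟨j₁.val, j₁.isLt⟩ ⟨k + 1, hk⟩) ∈ L₁.p.edges := hA k hk
    have h1 := L₁.p.fst_mem_support_of_mem_edges hp
    have h2 := L₁.q.fst_mem_support_of_mem_edges hmem
    exact absurd h2 (L₁.disj _ h1)
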